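/- Let α ≥ 1 and let G be a simple graph on n vertices whose edge set can be partitioned into α sets each forming a forest. Let r be a real number with r ≥ 10(α²n)^{1/3} and set s = r/10. Call a vertex small if its degree is at most r, large if its degree is at least αn/s, and medium otherwise. Suppose an orientation of the edges of G satisfies: (i) every edge directed away from a large vertex is directed toward a large vertex, and (ii) every edge directed away from a medium vertex is directed toward a vertex that is large, or toward a medium vertex having at least s medium neighbors. Then every vertex of G has out-degree at most r. -/

import Mathlib

/-- `o` is an orientation of the graph `G`: it assigns to each edge of `G` one of its two
endpoints as head. -/
def IsOrientation {V : Type*} (G : SimpleGraph V) (o : Sym2 V → V) : Prop :=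
  ∀ e ∈ G.edgeSet, o e ∈ e

/-- The out-degree of a vertex `v` under an orientation `o` of `G`: the number of edges of `G`
incident to `v` whose head is not `v`. -/
def outDegree {V : Type*} [Fintype V] [DecidableEq V] (G : SimpleGraph V) [DecidableRel G.Adj]
    (o : Sym2 V → V) (v : V) : ℕ :=
  (G.edgeFinset.filter (fun e => v ∈ e ∧ o e ≠ v)).card

/-- The subgraph of `G` consisting of the edges with label `i` under the edge-labeling `c`. -/
def labelGraph {V : Type*} {k : ℕ} (G : SimpleGraph V) (c : Sym2 V → Fin k) (i : Fin k) :
    SimpleGraph V where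
  Adj u v := G.Adj u v ∧ c s(u, v) = i
  symm := by
    constructor
    intro u v ⟨h1, h2⟩
    exact ⟨h1.symm, by rwa [Sym2.eq_swap]⟩
  loopless := ⟨fun v ⟨h, _⟩ => h.ne rfl⟩

/-- A vertex is *large* if its degree is at least `αn/s`. -/
def IsLargeVx {V : Type*} [Fintype V] [DecidableEq V] (G : SimpleGraph V) [DecidableRel G.Adj]
    (α n : ℕ) (s : ℝ) (v : V) : Prop :=
  (α : ℝ) * n / s ≤ (G.degree v : ℝ)

/-- A vertex is *medium* if its degree is more than `r` but less than `αn/s`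
(i.e. it is neither small nor large). -/
def IsMediumVx {V : Type*} [Fintype V] [DecidableEq V] (G : SimpleGraph V) [DecidableRel G.Adj]
    (α n : ℕ) (r s : ℝ) (v : V) : Prop :=
  r < (G.degree v : ℝ) ∧ (G.degree v : ℝ) < (α : ℝ) * n / s



theorem acyclic_card_edgeFinset_le' {V : Type*} [Fintype V] [DecidableEq V]
    (G : SimpleGraph V) [DecidableRel G.Adj] (hG : G.IsAcyclic) :
    G.edgeFinset.card ≤ Fintype.card V := by
  classical
  set R : V → V := fun x => (G.connectedComponentMk x).out with hRdef
  set D : V → ℕ := fun x => G.dist (R x) x with hDdef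
  have hreach : ∀ x, G.Reachable (R x) x := by
    intro x
    exact (SimpleGraph.ConnectedComponent.eq.mp (Quot.out_eq (G.connectedComponentMk x)))
  have hRadj : ∀ {u v : V}, G.Adj u v → R u = R v := by
    intro u v h
    exact congrArg Quot.out (SimpleGraph.ConnectedComponent.sound h.reachable)
  -- adjacent vertices have different distances to the root
  have hDne : ∀ {u v : V}, G.Adj u v → D u ≠ D v := by
    intro u v huv heq
    have hru : R u = R v := hRadj huv
    obtain ⟨p, hp, hplen⟩ := (hreach u).exists_path_of_dist
    have hrv : G.Reachable (R u) v := by rw [hru]; exact hreach v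
    obtain ⟨q, hq, hqlen⟩ := hrv.exists_path_of_dist
    have hdv : G.dist (R u) v = D v := by rw [hDdef]; rw [hru]
    -- the unique path between u and v is the single edge
    have hsingle : (SimpleGraph.Walk.cons huv SimpleGraph.Walk.nil).IsPath := by
      simp [SimpleGraph.Walk.cons_isPath_iff, huv.ne]
    have hWb : (p.reverse.append q).bypass.IsPath := SimpleGraph.Walk.bypass_isPath _
    have hEq : (⟨(p.reverse.append q).bypass, hWb⟩ : G.Path u v)
        = ⟨SimpleGraph.Walk.cons huv SimpleGraph.Walk.nil, hsingle⟩ := hG.path_unique _ _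
    have hmem : s(u, v) ∈ (p.reverse.append q).bypass.edges := by
      have := congrArg (fun (P : G.Path u v) => (P : G.Walk u v).edges) hEq
      simp only at this
      rw [this]
      simp
    have hmem2 : s(u, v) ∈ p.edges ∨ s(u, v) ∈ q.edges := by
      have h2 := SimpleGraph.Walk.edges_bypass_subset _ hmem
      rw [SimpleGraph.Walk.edges_append, SimpleGraph.Walk.edges_reverse] at h2
      rcases List.mem_append.mp h2 with h3 | h3
      · exact Or.inl (List.mem_reverse.mp h3)
      · exact Or.inr h3
    rcases hmem2 with h3 | h3
    · have hv : v ∈ p.support := SimpleGraph.Walk.snd_mem_support_of_mem_edges p h3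
      have h4 : G.dist (R u) v ≤ (p.takeUntil v hv).length := SimpleGraph.dist_le _
      have h5 : (p.takeUntil v hv).length + (p.dropUntil v hv).length = p.length := by
        rw [← SimpleGraph.Walk.length_append, SimpleGraph.Walk.take_spec]
      have h6 : (p.dropUntil v hv).length ≠ 0 := by
        intro h0
        exact huv.ne' (SimpleGraph.Walk.eq_of_length_eq_zero h0)
      have h7 : G.dist (R u) u = D u := by rw [hDdef]
      omega
    · have hu : u ∈ q.support := SimpleGraph.Walk.fst_mem_support_of_mem_edges q h3
      have h4 : G.dist (R u) u ≤ (q.takeUntil u hu).length := SimpleGraph.dist_le _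
      have h5 : (q.takeUntil u hu).length + (q.dropUntil u hu).length = q.length := by
        rw [← SimpleGraph.Walk.length_append, SimpleGraph.Walk.take_spec]
      have h6 : (q.dropUntil u hu).length ≠ 0 := by
        intro h0
        exact huv.ne (SimpleGraph.Walk.eq_of_length_eq_zero h0)
      have h7 : G.dist (R u) u = D u := by rw [hDdef]
      omega
  -- each vertex has at most one neighbor strictly closer to the root
  have hkey : ∀ {x a b : V}, G.Adj x a → G.Adj x b → D a < D x → D b < D x → a = b := by
    intro x a b hxa hxb hda hdb
    have hax : R a = R x := hRadj hxa.symm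
    have hbx : R b = R x := hRadj hxb.symm
    have hrA : G.Reachable (R x) a := hax ▸ hreach a
    have hrB : G.Reachable (R x) b := hbx ▸ hreach b
    obtain ⟨p, hp, hplen⟩ := hrA.exists_path_of_dist
    obtain ⟨q, hq, hqlen⟩ := hrB.exists_path_of_dist
    have hdax : G.dist (R x) a = D a := by rw [hDdef, ← hax]
    have hdbx : G.dist (R x) b = D b := by rw [hDdef, ← hbx]
    have hdxx : G.dist (R x) x = D x := by rw [hDdef]
    have hxp : x ∉ p.support := by
      intro hxs
      have h1 : G.dist (R x) x ≤ (p.takeUntil x hxs).length := SimpleGraph.dist_le _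
      have h2 := SimpleGraph.Walk.length_takeUntil_le p hxs
      omega
    have hxq : x ∉ q.support := by
      intro hxs
      have h1 : G.dist (R x) x ≤ (q.takeUntil x hxs).length := SimpleGraph.dist_le _
      have h2 := SimpleGraph.Walk.length_takeUntil_le q hxs
      omega
    have hpa : (SimpleGraph.Walk.cons hxa p.reverse).reverse.IsPath := by
      rw [SimpleGraph.Walk.isPath_reverse_iff, SimpleGraph.Walk.cons_isPath_iff]
      refine ⟨by rwa [SimpleGraph.Walk.isPath_reverse_iff], ?_⟩
      rwa [SimpleGraph.Walk.support_reverse, List.mem_reverse]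
    have hpb : (SimpleGraph.Walk.cons hxb q.reverse).reverse.IsPath := by
      rw [SimpleGraph.Walk.isPath_reverse_iff, SimpleGraph.Walk.cons_isPath_iff]
      refine ⟨by rwa [SimpleGraph.Walk.isPath_reverse_iff], ?_⟩
      rwa [SimpleGraph.Walk.support_reverse, List.mem_reverse]
    have hEq : (⟨(SimpleGraph.Walk.cons hxa p.reverse).reverse, hpa⟩ : G.Path (R x) x)
        = ⟨(SimpleGraph.Walk.cons hxb q.reverse).reverse, hpb⟩ := hG.path_unique _ _
    have hEq2 : (SimpleGraph.Walk.cons hxa p.reverse) = (SimpleGraph.Walk.cons hxb q.reverse) := by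
      have := congrArg (fun (P : G.Path (R x) x) => (P : G.Walk (R x) x).reverse) hEq
      simpa using this
    have := congrArg (fun (w : G.Walk x (R x)) => w.getVert 1) hEq2
    simpa [SimpleGraph.Walk.getVert_cons_succ, SimpleGraph.Walk.getVert_zero] using this
  -- the injection from edges to vertices
  let φ : V ≃ Fin (Fintype.card V) := Fintype.equivFin V
  let g : V → V → V := fun u v =>
    if D u < D v then v else if D v < D u then u else if (φ u : ℕ) ≤ (φ v : ℕ) then v else u
  have hgsym : ∀ u v, g u v = g v u := by
    intro u v
    by_cases h : u = v
    · subst h; rfl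
    have hφ : (φ u : ℕ) ≠ (φ v : ℕ) := fun hh => h (φ.injective (Fin.val_injective hh))
    simp only [g]
    split_ifs <;> first | rfl | (exfalso; omega)
  let f : Sym2 V → V := Sym2.lift ⟨g, hgsym⟩
  have hf : ∀ {u v : V}, G.Adj u v →
      (f s(u, v) = u ∧ D v < D u) ∨ (f s(u, v) = v ∧ D u < D v) := by
    intro u v h
    have hne := hDne h
    rcases lt_or_gt_of_ne hne with h' | h'
    · right
      refine ⟨?_, h'⟩
      simp only [f, Sym2.lift_mk, g]
      rw [if_pos h']
    · left
      refine ⟨?_, h'⟩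
      simp only [f, Sym2.lift_mk, g]
      rw [if_neg (by omega), if_pos h']
  have hinj : Set.InjOn f ↑G.edgeFinset := by
    intro e1 h1 e2 h2 hfe
    induction e1 using Sym2.ind with
    | _ u1 v1 =>
    induction e2 using Sym2.ind with
    | _ u2 v2 =>
    rw [Finset.mem_coe, SimpleGraph.mem_edgeFinset, SimpleGraph.mem_edgeSet] at h1 h2
    rcases hf h1 with ⟨he1, hd1⟩ | ⟨he1, hd1⟩ <;> rcases hf h2 with ⟨he2, hd2⟩ | ⟨he2, hd2⟩
    · rw [he1, he2] at hfe
      subst hfe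
      have := hkey h1 h2 hd1 hd2
      rw [this]
    · rw [he1, he2] at hfe
      subst hfe
      have := hkey h1 h2.symm hd1 hd2
      rw [this, Sym2.eq_swap]
    · rw [he1, he2] at hfe
      subst hfe
      have := hkey h1.symm h2 hd1 hd2
      rw [this, Sym2.eq_swap]
    · rw [he1, he2] at hfe
      subst hfe
      have := hkey h1.symm h2.symm hd1 hd2
      rw [this]
  have := Finset.card_le_card_of_injOn f (fun e _ => Finset.mem_univ (f e)) hinj
  simpa using this

theorem label_card_le' {V : Type*} [Fintype V] [DecidableEq V]
    (G : SimpleGraph V) [DecidableRel G.Adj] {k : ℕ} (c : Sym2 V → Fin k)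
    (h : ∀ i, (labelGraph G c i).IsAcyclic) :
    G.edgeFinset.card ≤ k * Fintype.card V := by
  classical
  have hsub : G.edgeFinset ⊆ Finset.univ.biUnion
      (fun i => (labelGraph G c i).edgeFinset) := by
    intro e he
    induction e using Sym2.ind with
    | _ u v =>
    rw [SimpleGraph.mem_edgeFinset, SimpleGraph.mem_edgeSet] at he
    refine Finset.mem_biUnion.mpr ⟨c s(u, v), Finset.mem_univ _, ?_⟩
    rw [SimpleGraph.mem_edgeFinset]
    exact (SimpleGraph.mem_edgeSet _).mpr (show G.Adj u v ∧ c s(u, v) = c s(u, v) from ⟨he, rfl⟩)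
  calc G.edgeFinset.card ≤ _ := Finset.card_le_card hsub
    _ ≤ ∑ i : Fin k, (labelGraph G c i).edgeFinset.card := Finset.card_biUnion_le
    _ ≤ ∑ _i : Fin k, Fintype.card V :=
        Finset.sum_le_sum (fun i _ => acyclic_card_edgeFinset_le' _ (h i))
    _ = k * Fintype.card V := by simp [Finset.sum_const, mul_comm]

theorem induced_bound' {V : Type*} [Fintype V] [DecidableEq V]
    (G : SimpleGraph V) [DecidableRel G.Adj] {k : ℕ} (c : Sym2 V → Fin k)
    (h : ∀ i, (labelGraph G c i).IsAcyclic) (S : Finset V) :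
    ∑ v ∈ S, ((G.neighborFinset v).filter (· ∈ S)).card ≤ 2 * (k * S.card) := by
  classical
  set H : SimpleGraph (↑S : Set V) := G.induce (↑S : Set V) with hH
  have hHadj : ∀ a b : (↑S : Set V), H.Adj a b ↔ G.Adj a.1 b.1 := by
    intro a b; rw [hH]; exact Iff.rfl
  set c' : Sym2 (↑S : Set V) → Fin k := fun e => c (Sym2.map Subtype.val e) with hc'
  have hforest' : ∀ i, (labelGraph H c' i).IsAcyclic := by
    intro i w cyc hcyc
    have hψ : ∀ a b : (↑S : Set V), (labelGraph H c' i).Adj a b →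
        (labelGraph G c i).Adj a.1 b.1 := by
      intro a b hab
      obtain ⟨h1, h2⟩ := (show H.Adj a b ∧ c' s(a, b) = i from hab)
      show G.Adj a.1 b.1 ∧ c s(a.1, b.1) = i
      refine ⟨(hHadj a b).mp h1, ?_⟩
      rw [← h2, hc']
      simp
    let ψ : labelGraph H c' i →g labelGraph G c i := ⟨Subtype.val, fun {a b} hab => hψ a b hab⟩
    exact h i (cyc.map ψ) (hcyc.map (f := ψ) Subtype.val_injective)
  have hE : H.edgeFinset.card ≤ k * S.card := by
    have := label_card_le' H c' hforest'
    simpa using this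
  have hdeg : ∀ x : (↑S : Set V), H.degree x = ((G.neighborFinset x.1).filter (· ∈ S)).card := by
    intro x
    rw [← SimpleGraph.card_neighborFinset_eq_degree]
    refine Finset.card_bij (fun (w : (↑S : Set V)) (_ : w ∈ H.neighborFinset x) => (w : V)) ?_ ?_ ?_
    · intro w hw
      rw [SimpleGraph.mem_neighborFinset] at hw
      rw [Finset.mem_filter, SimpleGraph.mem_neighborFinset]
      exact ⟨(hHadj x w).mp hw, w.2⟩
    · intro w1 _ w2 _ hww
      exact Subtype.ext hww
    · intro y hy
      rw [Finset.mem_filter, SimpleGraph.mem_neighborFinset] at hy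
      refine ⟨⟨y, hy.2⟩, ?_, rfl⟩
      rw [SimpleGraph.mem_neighborFinset]
      exact (hHadj x ⟨y, hy.2⟩).mpr hy.1
  have hhs : ∑ x : (↑S : Set V), H.degree x = 2 * H.edgeFinset.card :=
    SimpleGraph.sum_degrees_eq_twice_card_edges H
  have hsum : ∑ v ∈ S, ((G.neighborFinset v).filter (· ∈ S)).card
      = ∑ x : (↑S : Set V), H.degree x := by
    rw [show (∑ x : (↑S : Set V), H.degree x)
      = ∑ x : (↑S : Set V), ((G.neighborFinset x.1).filter (· ∈ S)).card from
        Finset.sum_congr rfl (fun x _ => hdeg x)]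
    exact (Finset.sum_coe_sort S _).symm
  omega

theorem outDegree_le_degree' {V : Type*} [Fintype V] [DecidableEq V] (G : SimpleGraph V)
    [DecidableRel G.Adj] (o : Sym2 V → V) (v : V) : outDegree G o v ≤ G.degree v := by
  classical
  rw [← SimpleGraph.card_incidenceFinset_eq_degree]
  apply Finset.card_le_card
  intro e he
  rw [Finset.mem_filter, SimpleGraph.mem_edgeFinset] at he
  rw [SimpleGraph.mem_incidenceFinset]
  exact ⟨he.1, he.2.1⟩

theorem outDegree_le_heads' {V : Type*} [Fintype V] [DecidableEq V] (G : SimpleGraph V)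
    [DecidableRel G.Adj] (o : Sym2 V → V) (ho : IsOrientation G o) (v : V) :
    outDegree G o v ≤ ((G.neighborFinset v).filter (fun w => o s(v, w) = w)).card := by
  classical
  have hrepr : ∀ e ∈ G.edgeFinset.filter (fun e => v ∈ e ∧ o e ≠ v), e = s(v, o e) := by
    intro e he
    rw [Finset.mem_filter, SimpleGraph.mem_edgeFinset] at he
    exact (Sym2.mem_and_mem_iff (Ne.symm he.2.2)).mp ⟨he.2.1, ho e he.1⟩
  apply Finset.card_le_card_of_injOn (fun e => o e)
  · intro e he
    have hee := hrepr e he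
    rw [Finset.mem_coe, Finset.mem_filter, SimpleGraph.mem_edgeFinset] at he
    rw [Finset.mem_coe, Finset.mem_filter, SimpleGraph.mem_neighborFinset]
    constructor
    · rw [← SimpleGraph.mem_edgeSet, ← hee]
      exact he.1
    · rw [← hee]
  · intro e1 h1 e2 h2 heq
    rw [hrepr e1 (Finset.mem_coe.mp h1), hrepr e2 (Finset.mem_coe.mp h2)]
    exact congrArg (fun w => s(v, w)) heq

open scoped Classical in
/-- Let `α ≥ 1` and let `G` be a simple graph on `n` vertices whose edge set
partitions into `α` forests. Let `r ≥ 10(α²n)^{1/3}` and `s = r/10`. Suppose an orientation of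
the edges of `G` satisfies: (i) every edge directed away from a large vertex is directed toward
a large vertex, and (ii) every edge directed away from a medium vertex is directed toward a
vertex that is large, or toward a medium vertex having at least `s` medium neighbors. Then every
vertex of `G` has out-degree at most `r`. -/
theorem stmt6 {V : Type*} [Fintype V] [DecidableEq V] (G : SimpleGraph V) [DecidableRel G.Adj]
    (n α : ℕ) (hα : 1 ≤ α) (hcard : Fintype.card V = n)
    (c : Sym2 V → Fin α) (hforest : ∀ i : Fin α, (labelGraph G c i).IsAcyclic)
    (r s : ℝ) (hr : 10 * ((α : ℝ) ^ 2 * n) ^ ((1 : ℝ) / 3) ≤ r) (hs : s = r / 10)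
    (o : Sym2 V → V) (ho : IsOrientation G o)
    (hlarge : ∀ u v : V, G.Adj u v → o s(u, v) = v →
      IsLargeVx G α n s u → IsLargeVx G α n s v)
    (hmedium : ∀ u v : V, G.Adj u v → o s(u, v) = v → IsMediumVx G α n r s u →
      (IsLargeVx G α n s v ∨ (IsMediumVx G α n r s v ∧
        s ≤ (((G.neighborFinset v).filter (fun w => IsMediumVx G α n r s w)).card : ℝ)))) :
    ∀ v : V, (outDegree G o v : ℝ) ≤ r := by
  classical
  intro v
  rcases Nat.eq_zero_or_pos n with hn | hn1
  · subst hn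
    exact ((Fintype.card_eq_zero_iff.mp hcard).false v).elim
  -- basic real facts
  have hα1 : (1:ℝ) ≤ (α:ℝ) := by exact_mod_cast hα
  have hn1' : (1:ℝ) ≤ (n:ℝ) := by exact_mod_cast hn1
  have hbase : (1:ℝ) ≤ (α:ℝ)^2 * n := by nlinarith
  have hA1 : (1:ℝ) ≤ ((α:ℝ)^2 * n) ^ ((1:ℝ)/3) := Real.one_le_rpow hbase (by norm_num)
  have hr10 : (10:ℝ) ≤ r := le_trans (by nlinarith) hr
  have hr0 : (0:ℝ) < r := by linarith
  have hs1 : (1:ℝ) ≤ s := by rw [hs]; linarith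
  have hs0 : (0:ℝ) < s := by linarith
  have hr3 : 1000 * ((α:ℝ)^2 * (n:ℝ)) ≤ r^3 := by
    have h1 : (10 * (((α:ℝ)^2*n)^((1:ℝ)/3)))^3 ≤ r^3 := by
      apply pow_le_pow_left₀ (by positivity) hr
    have h2 : ((((α:ℝ)^2*n)^((1:ℝ)/3)))^(3:ℕ) = (α:ℝ)^2*n := by
      rw [← Real.rpow_natCast ((((α:ℝ)^2*n))^((1:ℝ)/3)) 3, ← Real.rpow_mul (by positivity)]
      norm_num
    rw [mul_pow, h2] at h1
    norm_num at h1
    linarith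
  -- edge count
  have hEdge : (G.edgeFinset.card : ℝ) ≤ (α:ℝ) * n := by
    have := label_card_le' G c hforest
    rw [hcard] at this
    exact_mod_cast this
  have hHand : ∑ u, (G.degree u : ℝ) = 2 * (G.edgeFinset.card : ℝ) := by
    exact_mod_cast SimpleGraph.sum_degrees_eq_twice_card_edges G
  set L : Finset V := Finset.univ.filter (IsLargeVx G α n s) with hLdef
  set S : Finset V := Finset.univ.filter (IsMediumVx G α n r s) with hSdef
  set M' : Finset V := S.filter
    (fun u => s ≤ (((G.neighborFinset u).filter (fun w => IsMediumVx G α n r s w)).card : ℝ))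
    with hM'def
  have hsum_all : ∀ (T : Finset V) (lb : ℝ), (∀ u ∈ T, lb ≤ (G.degree u : ℝ)) →
      (T.card : ℝ) * lb ≤ 2 * ((α:ℝ) * n) := by
    intro T lb hT
    have h1 := Finset.card_nsmul_le_sum T (fun u => (G.degree u : ℝ)) lb hT
    rw [nsmul_eq_mul] at h1
    have h2 : ∑ u ∈ T, (G.degree u : ℝ) ≤ ∑ u, (G.degree u : ℝ) :=
      Finset.sum_le_sum_of_subset_of_nonneg (Finset.subset_univ T)
        (fun _ _ _ => Nat.cast_nonneg _)
    linarith
  -- bound on the number of large vertices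
  have hLsum : (L.card : ℝ) * ((α:ℝ) * n / s) ≤ 2 * ((α:ℝ) * n) := by
    apply hsum_all
    intro u hu
    exact (Finset.mem_filter.mp hu).2
  have hαn1 : (1:ℝ) ≤ (α:ℝ) * n := by nlinarith
  have hL : (L.card : ℝ) ≤ 2 * s := by
    have hL0 : (0:ℝ) ≤ (L.card : ℝ) := Nat.cast_nonneg _
    have h1 : (L.card : ℝ) * ((α:ℝ) * n) ≤ 2 * ((α:ℝ) * n) * s := by
      have h := mul_le_mul_of_nonneg_right hLsum hs0.le
      calc (L.card : ℝ) * ((α:ℝ) * n) = (L.card : ℝ) * ((α:ℝ) * n / s) * s := by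
            field_simp
        _ ≤ 2 * ((α:ℝ) * n) * s := h
    have h2 : (L.card : ℝ) * ((α:ℝ) * n) ≤ (2 * s) * ((α:ℝ) * n) := by
      calc (L.card : ℝ) * ((α:ℝ) * n) ≤ 2 * ((α:ℝ) * n) * s := h1
        _ = (2 * s) * ((α:ℝ) * n) := by ring
    exact le_of_mul_le_mul_right h2 (by linarith : (0:ℝ) < (α:ℝ) * n)
  -- bound on the number of medium vertices
  have hMc : (S.card : ℝ) * r ≤ 2 * ((α:ℝ) * n) := by
    apply hsum_all
    intro u hu
    exact le_of_lt (Finset.mem_filter.mp hu).2.1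
  -- medium-neighbor counting via the induced subgraph
  have hconv : ∀ u : V, (G.neighborFinset u).filter (fun w => IsMediumVx G α n r s w)
      = (G.neighborFinset u).filter (· ∈ S) := by
    intro u
    apply Finset.filter_congr
    intro w _
    simp [hSdef]
  have hmedsum : (∑ u ∈ S, (((G.neighborFinset u).filter (· ∈ S)).card : ℝ))
      ≤ 2 * ((α:ℝ) * S.card) := by
    have := induced_bound' G c hforest S
    exact_mod_cast this
  have hM's : (M'.card : ℝ) * s ≤ 2 * ((α:ℝ) * S.card) := by
    have h1 := Finset.card_nsmul_le_sum M'
      (fun u => (((G.neighborFinset u).filter (· ∈ S)).card : ℝ)) s ?_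
    · rw [nsmul_eq_mul] at h1
      have h2 : ∑ u ∈ M', (((G.neighborFinset u).filter (· ∈ S)).card : ℝ)
          ≤ ∑ u ∈ S, (((G.neighborFinset u).filter (· ∈ S)).card : ℝ) :=
        Finset.sum_le_sum_of_subset_of_nonneg (Finset.filter_subset _ _)
          (fun _ _ _ => Nat.cast_nonneg _)
      linarith
    · intro u hu
      have := (Finset.mem_filter.mp hu).2
      rwa [hconv u] at this
  have hM'25 : (M'.card : ℝ) ≤ r / 25 := by
    have hSc0 : (0:ℝ) ≤ (S.card : ℝ) := Nat.cast_nonneg _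
    have hM'0 : (0:ℝ) ≤ (M'.card : ℝ) := Nat.cast_nonneg _
    have k1 : (M'.card : ℝ) * s * r ≤ 2 * ((α:ℝ) * S.card) * r :=
      mul_le_mul_of_nonneg_right hM's hr0.le
    have k2 : 2 * ((α:ℝ) * S.card) * r ≤ 4 * (α:ℝ)^2 * n := by
      have h := mul_le_mul_of_nonneg_left hMc (by positivity : (0:ℝ) ≤ 2 * (α:ℝ))
      calc 2 * ((α:ℝ) * S.card) * r = 2 * (α:ℝ) * ((S.card : ℝ) * r) := by ring
        _ ≤ 2 * (α:ℝ) * (2 * ((α:ℝ) * n)) := h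
        _ = 4 * (α:ℝ)^2 * n := by ring
    have k3 : (M'.card : ℝ) * r^2 ≤ r^3 / 25 := by
      have k12 : (M'.card : ℝ) * s * r ≤ 4 * (α:ℝ)^2 * n := le_trans k1 k2
      rw [hs] at k12
      have e : (M'.card : ℝ) * (r/10) * r = (M'.card : ℝ) * r^2 / 10 := by ring
      rw [e] at k12
      have e2 : 4 * (α:ℝ)^2 * n = 4 * ((α:ℝ)^2 * n) := by ring
      rw [e2] at k12
      linarith [hr3]
    have : (M'.card : ℝ) * r^2 ≤ (r / 25) * r^2 := by
      calc (M'.card : ℝ) * r^2 ≤ r^3/25 := k3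
        _ = (r/25) * r^2 := by ring
    exact le_of_mul_le_mul_right this (by positivity)
  -- per-vertex case analysis
  have hheads : (outDegree G o v : ℝ)
      ≤ (((G.neighborFinset v).filter (fun w => o s(v, w) = w)).card : ℝ) := by
    exact_mod_cast outDegree_le_heads' G o ho v
  rcases le_or_gt (G.degree v : ℝ) r with hsmall | hdr
  · calc (outDegree G o v : ℝ) ≤ (G.degree v : ℝ) := by exact_mod_cast outDegree_le_degree' G o v
      _ ≤ r := hsmall
  rcases lt_or_ge (G.degree v : ℝ) ((α:ℝ) * n / s) with hmed | hlrg
  · -- medium vertex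
    have hm : IsMediumVx G α n r s v := ⟨hdr, hmed⟩
    have hsub : (G.neighborFinset v).filter (fun w => o s(v, w) = w) ⊆ L ∪ M' := by
      intro w hw
      rw [Finset.mem_filter, SimpleGraph.mem_neighborFinset] at hw
      rcases hmedium v w hw.1 hw.2 hm with hl | ⟨hmw, hcnt⟩
      · apply Finset.mem_union_left
        rw [hLdef, Finset.mem_filter]
        exact ⟨Finset.mem_univ _, hl⟩
      · apply Finset.mem_union_right
        rw [hM'def, Finset.mem_filter]
        refine ⟨?_, hcnt⟩
        rw [hSdef, Finset.mem_filter]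
        exact ⟨Finset.mem_univ _, hmw⟩
    have hcount : (outDegree G o v : ℝ) ≤ (L.card : ℝ) + (M'.card : ℝ) := by
      have h1 : ((G.neighborFinset v).filter (fun w => o s(v, w) = w)).card
          ≤ L.card + M'.card :=
        le_trans (Finset.card_le_card hsub) (Finset.card_union_le _ _)
      have h2 : (((G.neighborFinset v).filter (fun w => o s(v, w) = w)).card : ℝ)
          ≤ (L.card : ℝ) + (M'.card : ℝ) := by exact_mod_cast h1
      linarith
    rw [hs] at hL
    linarith
  · -- large vertex
    have hl : IsLargeVx G α n s v := hlrg
    have hsub : (G.neighborFinset v).filter (fun w => o s(v, w) = w) ⊆ L := by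
      intro w hw
      rw [Finset.mem_filter, SimpleGraph.mem_neighborFinset] at hw
      rw [hLdef, Finset.mem_filter]
      exact ⟨Finset.mem_univ _, hlarge v w hw.1 hw.2 hl⟩
    have hcount : (outDegree G o v : ℝ) ≤ (L.card : ℝ) := by
      have h1 := Finset.card_le_card hsub
      have h2 : (((G.neighborFinset v).filter (fun w => o s(v, w) = w)).card : ℝ)
          ≤ (L.card : ℝ) := by exact_mod_cast h1
      linarith
    rw [hs] at hL
    linarith
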